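/- For all natural numbers n and m, the number of pairs (A,B) of Finsets of Fin(n+1) with A ≼ B and A.card + B.card = m+1 equals ∑_{j=0}^{n} C(n+1, j+1) · b(j,m), where b(j,m) is the number of pairs (A′,B′) of Finsets of Fin(j+1) with A′ ≼ B′, A′ ∪ B′ = Finset.univ, and A′.card + B′.card = m+1, and C denotes the binomial coefficient. (Decomposition |Cil Γ₊[n]| = ∑_j C(n+1,j+1)|breve Cil Γ₊[j]|.) -/

import Mathlib

/-- `b(j,m)`: the number of pairs `(A,B)` of Finsets of `Fin (j+1)` satisfying the
standard cylinder condition, covering `Fin (j+1)`, with `A.card + B.card = m+1`. -/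
noncomputable def breveCil (j m : ℕ) : ℕ :=
  Nat.card {AB : Finset (Fin (j + 1)) × Finset (Fin (j + 1)) //
    ((AB.1 ∩ AB.2).card ≤ 1 ∧ ∀ a ∈ AB.1, ∀ b ∈ AB.2, a ≤ b) ∧
      AB.1 ∪ AB.2 = Finset.univ ∧ AB.1.card + AB.2.card = m + 1}

open Finset in
lemma fixed_union (n j m : ℕ) (S : Finset (Fin (n+1))) (hS : S.card = j+1) :
    Nat.card {AB : Finset (Fin (n + 1)) × Finset (Fin (n + 1)) //
      (((AB.1 ∩ AB.2).card ≤ 1 ∧ ∀ a ∈ AB.1, ∀ b ∈ AB.2, a ≤ b) ∧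
        AB.1.card + AB.2.card = m + 1) ∧ AB.1 ∪ AB.2 = S} = breveCil j m := by
  classical
  set e := S.orderIsoOfFin hS with he
  set g : Finset (Fin (n+1)) → Finset (Fin (j+1)) :=
    fun T => univ.filter (fun i => (e i : Fin (n+1)) ∈ T) with hg
  set g' : Finset (Fin (j+1)) → Finset (Fin (n+1)) :=
    fun B => B.image (fun i => (e i : Fin (n+1))) with hg'
  have einj : Function.Injective (fun i : Fin (j+1) => (e i : Fin (n+1))) := by
    intro a b h
    simpa using e.injective (Subtype.ext h)
  have hgg' : ∀ B, g (g' B) = B := by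
    intro B
    ext i
    simp only [hg, hg', mem_filter, mem_univ, true_and, mem_image]
    constructor
    · rintro ⟨i', hi', h⟩; rwa [einj h] at hi'
    · intro h; exact ⟨i, h, rfl⟩
  have hg'g : ∀ T, T ⊆ S → g' (g T) = T := by
    intro T hT
    ext x
    simp only [hg, hg', mem_image, mem_filter, mem_univ, true_and]
    constructor
    · rintro ⟨i, hi, rfl⟩; exact hi
    · intro hx
      refine ⟨e.symm ⟨x, hT hx⟩, ?_, ?_⟩ <;> simp [hx]
  have hg'card : ∀ B, (g' B).card = B.card := fun B => card_image_of_injective _ einj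
  have hgcard : ∀ T, T ⊆ S → (g T).card = T.card := by
    intro T hT
    conv_rhs => rw [← hg'g T hT]
    rw [hg'card]
  have hginter : ∀ A B, g A ∩ g B = g (A ∩ B) := by
    intro A B; ext i; simp [hg, and_and_left, and_assoc]
  have hg'inter : ∀ A B, g' A ∩ g' B = g' (A ∩ B) := by
    intro A B; rw [hg', ← image_inter _ _ einj]
  have hgunion : ∀ A B, g A ∪ g B = g (A ∪ B) := by
    intro A B; ext i; simp [hg]
  have hg'union : ∀ A B, g' A ∪ g' B = g' (A ∪ B) := by
    intro A B; simp [hg', image_union]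
  have hg'univ : g' univ = S := by
    ext x
    simp only [hg', mem_image, mem_univ, true_and]
    constructor
    · rintro ⟨i, rfl⟩; exact (e i).2
    · intro hx; exact ⟨e.symm ⟨x, hx⟩, by simp⟩
  have hgS : g S = univ := by
    ext i; simp [hg, (e i).2]
  have hgU : ∀ U, U ⊆ S → (g U = univ ↔ U = S) := by
    intro U hU
    constructor
    · intro h
      rw [← hg'g U hU, h, hg'univ]
    · rintro rfl; exact hgS
  rw [breveCil]
  apply Nat.card_congr
  refine ⟨fun AB => ⟨(g AB.1.1, g AB.1.2), ?_⟩, fun AB => ⟨(g' AB.1.1, g' AB.1.2), ?_⟩, ?_, ?_⟩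
  · obtain ⟨⟨A, B⟩, ⟨⟨hci, hle⟩, hcard⟩, hun⟩ := AB
    have hA : A ⊆ S := hun ▸ subset_union_left
    have hB : B ⊆ S := hun ▸ subset_union_right
    refine ⟨⟨?_, ?_⟩, ?_, ?_⟩
    · rw [hginter, hgcard _ (subset_trans inter_subset_left hA)]; exact hci
    · intro a ha b hb
      simp only [hg, mem_filter] at ha hb
      have := hle _ ha.2 _ hb.2
      exact e.le_iff_le.mp this
    · rw [hgunion, hgU _ (union_subset hA hB)]; exact hun
    · rw [hgcard _ hA, hgcard _ hB]; exact hcard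
  · obtain ⟨⟨A, B⟩, ⟨hci, hle⟩, hun, hcard⟩ := AB
    refine ⟨⟨?_, ?_⟩, ?_⟩
    constructor
    · rw [hg'inter, hg'card]; exact hci
    · intro a ha b hb
      simp only [hg', mem_image] at ha hb
      obtain ⟨i, hi, rfl⟩ := ha
      obtain ⟨i', hi', rfl⟩ := hb
      exact e.le_iff_le.mpr (hle _ hi _ hi')
    · rw [hg'card, hg'card]; exact hcard
    · rw [hg'union, hun, hg'univ]
  · rintro ⟨⟨A, B⟩, h, hun⟩
    have hA : A ⊆ S := hun ▸ subset_union_left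
    have hB : B ⊆ S := hun ▸ subset_union_right
    simp [hg'g _ hA, hg'g _ hB]
  · rintro ⟨⟨A, B⟩, h⟩
    simp [hgg']

theorem cyl_decomposition (n m : ℕ) :
    Nat.card {AB : Finset (Fin (n + 1)) × Finset (Fin (n + 1)) //
        ((AB.1 ∩ AB.2).card ≤ 1 ∧ ∀ a ∈ AB.1, ∀ b ∈ AB.2, a ≤ b) ∧
          AB.1.card + AB.2.card = m + 1} =
      ∑ j ∈ Finset.range (n + 1), Nat.choose (n + 1) (j + 1) * breveCil j m := by
  classical
  set P : Finset (Fin (n+1)) × Finset (Fin (n+1)) → Prop :=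
    fun AB => ((AB.1 ∩ AB.2).card ≤ 1 ∧ ∀ a ∈ AB.1, ∀ b ∈ AB.2, a ≤ b) ∧
      AB.1.card + AB.2.card = m + 1 with hP
  rw [Nat.card_eq_fintype_card, Fintype.card_subtype]
  rw [Finset.card_eq_sum_card_fiberwise (f := fun AB => AB.1 ∪ AB.2)
    (t := (Finset.range (n+1)).biUnion (fun j => Finset.univ.powersetCard (j+1)))]
  · rw [Finset.sum_biUnion]
    · refine Finset.sum_congr rfl (fun j hj => ?_)
      have hconst : ∀ S ∈ Finset.univ.powersetCard (j+1),
          ((Finset.univ.filter P).filter (fun AB => AB.1 ∪ AB.2 = S)).card = breveCil j m := by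
        intro S hS
        rw [Finset.mem_powersetCard] at hS
        rw [Finset.filter_filter]
        rw [← fixed_union n j m S hS.2, Nat.card_eq_fintype_card, Fintype.card_subtype]
      rw [Finset.sum_congr rfl hconst, Finset.sum_const, smul_eq_mul,
        Finset.card_powersetCard, Finset.card_univ, Fintype.card_fin]
    · intro a ha b hb hab
      simp only [Finset.disjoint_left, Finset.mem_powersetCard_univ]
      intro S h1 h2
      exact hab (by omega)
  · intro AB hAB
    rw [Finset.mem_coe, Finset.mem_filter] at hAB
    have hne : (AB.1 ∪ AB.2).Nonempty := by
      rcases Finset.eq_empty_or_nonempty AB.1 with h | h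
      · rcases Finset.eq_empty_or_nonempty AB.2 with h2 | h2
        · exfalso
          have := hAB.2.2
          rw [h, h2] at this
          simp at this
        · exact Finset.Nonempty.mono Finset.subset_union_right h2
      · exact Finset.Nonempty.mono Finset.subset_union_left h
    have hcle : (AB.1 ∪ AB.2).card ≤ n + 1 := by
      have := Finset.card_le_univ (AB.1 ∪ AB.2)
      simpa using this
    have hc1 : 1 ≤ (AB.1 ∪ AB.2).card := Finset.Nonempty.card_pos hne
    simp only [Finset.mem_coe, Finset.mem_biUnion]
    exact ⟨(AB.1 ∪ AB.2).card - 1, Finset.mem_range.mpr (by omega),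
      Finset.mem_powersetCard_univ.mpr (by omega)⟩
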